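/- The integral ∫_0^∞ (e^{-2x} − cos(2x))/x dx converges and equals 0. -/

import Mathlib

open MeasureTheory Filter Real
open Set

noncomputable def ff (x : ℝ) : ℝ := Real.exp (-2*x) - Real.cos (2*x)
noncomputable def FF (x t : ℝ) : ℝ := ff x * Real.exp (-(x*t))

lemma aux_abs_le {x : ℝ} (hx : 0 ≤ x) : |ff x| ≤ 4*x := by
  have h1 : Real.exp (-2*x) ≤ 1 := Real.exp_le_one_iff.mpr (by linarith)
  have h2 : 1 + (-2*x) ≤ Real.exp (-2*x) := by have := Real.add_one_le_exp (-2*x); linarith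
  have h3 : 1 - Real.cos (2*x) ≤ 2*x := by
    have hc : Real.cos (2*(x)) = 1 - 2 * Real.sin x ^ 2 := by
      have := Real.cos_sq x
      have := Real.sin_sq_add_cos_sq x
      nlinarith [Real.cos_sq x]
    have hs1 : |Real.sin x| ≤ |x| := Real.abs_sin_le_abs
    have hs2 : |Real.sin x| ≤ 1 := Real.abs_sin_le_one x
    have : Real.sin x ^ 2 ≤ x := by
      rw [← sq_abs]
      calc |Real.sin x|^2 ≤ |x| * 1 := by nlinarith [abs_nonneg (Real.sin x)]
      _ = x := by rw [mul_one, abs_of_nonneg hx]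
    nlinarith
  have h4 : Real.cos (2*x) ≤ 1 := Real.cos_le_one _
  rw [ff, abs_le]; constructor <;> nlinarith

lemma exp_int {x : ℝ} (hx : 0 < x) : ∫ t in Ioi (0:ℝ), Real.exp (-(x*t)) = 1/x := by
  have h := integral_comp_mul_left_Ioi (fun u => Real.exp (-u)) 0 hx
  simp only [mul_zero, integral_exp_neg_Ioi, neg_zero, Real.exp_zero, smul_eq_mul, mul_one] at h
  rw [show (fun t => Real.exp (-(x*t))) = (fun t => (fun u => Real.exp (-u)) (x*t)) from rfl]
  rw [h]; ring

noncomputable def Phi (t T : ℝ) : ℝ :=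
  -Real.exp (-((2+t)*T))/(2+t) - Real.exp (-(T*t)) * (2*Real.sin (2*T) - t*Real.cos (2*T))/(t^2+4)

lemma hasDerivAt_Phi {t : ℝ} (ht : 0 ≤ t) (x : ℝ) :
    HasDerivAt (Phi t) (FF x t) x := by
  have hc : (2+t) ≠ 0 := by linarith
  have hd : (t^2+4) ≠ 0 := by positivity
  have hA : HasDerivAt (fun y : ℝ => Real.exp (-((2+t)*y))) (-(2+t) * Real.exp (-((2+t)*x))) x := by
    have h1 : HasDerivAt (fun y : ℝ => -((2+t)*y)) (-(2+t)) x := by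
      exact ((hasDerivAt_id x).const_mul (2+t)).neg.congr_deriv (by ring)
    simpa [mul_comm] using h1.exp
  have hE : HasDerivAt (fun y : ℝ => Real.exp (-(y*t))) (-t * Real.exp (-(x*t))) x := by
    have h1 : HasDerivAt (fun y : ℝ => -(y*t)) (-t) x := by
      exact (hasDerivAt_mul_const t).neg
    simpa [mul_comm] using h1.exp
  have h2 : HasDerivAt (fun y : ℝ => 2*y) 2 x := by simpa using (hasDerivAt_id x).const_mul 2
  have hS := ((h2.sin.const_mul 2).sub (h2.cos.const_mul t))
  have hD := ((hA.div_const (2+t)).neg).sub ((hE.mul hS).div_const (t^2+4))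
  convert hD using 1
  · rfl
  · rfl
  · funext y; rw [Phi]; simp only [Pi.neg_apply, Pi.sub_apply, Pi.mul_apply]; ring
  · have hsplit : Real.exp (-((2+t)*x)) = Real.exp (-2*x) * Real.exp (-(x*t)) := by
      rw [← Real.exp_add]; ring_nf
    show ff x * Real.exp (-(x*t)) = _
    rw [ff, hsplit]
    simp only [Pi.sub_apply]
    field_simp
    ring

noncomputable def gg (t : ℝ) : ℝ := 1/(2+t) - t/(t^2+4)

lemma cont_FF (t : ℝ) : Continuous (fun x => FF x t) := by
  unfold FF ff; fun_prop

lemma inner_int {t : ℝ} (ht : 0 ≤ t) {T : ℝ} (hT : 0 ≤ T) :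
    ∫ x in Ioc (0:ℝ) T, FF x t = gg t + Phi t T := by
  rw [← intervalIntegral.integral_of_le hT,
    intervalIntegral.integral_eq_sub_of_hasDerivAt (fun x _ => hasDerivAt_Phi ht x)
      ((cont_FF t).intervalIntegrable _ _)]
  have hc : (2+t) ≠ 0 := by linarith
  have hd : (t^2+4) ≠ 0 := by positivity
  have h0 : Phi t 0 = -gg t := by
    rw [Phi, gg]; simp; ring
  rw [h0]; ring

lemma gg_abs {t : ℝ} (ht : 0 ≤ t) : |gg t| ≤ 2 * (1+t^2)⁻¹ := by
  have hc : (0:ℝ) < 2+t := by linarith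
  have hd : (0:ℝ) < t^2+4 := by positivity
  have h1 : (0:ℝ) < 1+t^2 := by positivity
  have e : gg t = (4-2*t)/((2+t)*(t^2+4)) := by rw [gg]; field_simp; ring
  rw [e, abs_div, abs_of_pos (by positivity : (0:ℝ) < (2+t)*(t^2+4)),
    div_le_iff₀ (by positivity)]
  have habs : |4-2*t| ≤ 2*(2+t) := by rw [abs_le]; constructor <;> linarith
  have h2 : 2*(1+t^2)⁻¹ * ((2+t)*(t^2+4)) = 2*((2+t)*(t^2+4))/(1+t^2) := by ring
  rw [h2, le_div_iff₀ h1]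
  nlinarith

lemma gg_integrable : IntegrableOn gg (Ioi (0:ℝ)) := by
  refine Integrable.mono' ((integrable_inv_one_add_sq.const_mul 2).restrict) ?_ ?_
  · apply Measurable.aestronglyMeasurable
    unfold gg
    exact ((measurable_const.div ((measurable_const.add measurable_id'))).sub
      (measurable_id'.div ((measurable_id'.pow_const 2).add_const 4)))
  · filter_upwards [ae_restrict_mem measurableSet_Ioi] with t ht
    exact (gg_abs (le_of_lt ht)).trans_eq rfl

noncomputable def GG (t : ℝ) : ℝ := Real.log (2+t) - Real.log (t^2+4)/2

lemma hasDerivAt_GG {t : ℝ} (ht : 0 ≤ t) : HasDerivAt GG (gg t) t := by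
  have hc : (2+t) ≠ 0 := by linarith
  have hd : (t^2+4) ≠ 0 := by positivity
  have h1 : HasDerivAt (fun t : ℝ => 2+t) 1 t := by simpa using (hasDerivAt_id t).const_add 2
  have h2 : HasDerivAt (fun t : ℝ => t^2+4) (2*t) t := by
    simpa using (hasDerivAt_pow 2 t).add_const 4
  have h := (h1.log hc).sub ((h2.log hd).div_const 2)
  refine h.congr_deriv ?_
  rw [gg]
  push_cast
  ring

lemma GG_cont_on : ContinuousOn gg (Ici (0:ℝ)) := by
  apply ContinuousOn.sub
  · exact ContinuousOn.div continuousOn_const (by fun_prop) (fun t ht => by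
      simp only [mem_Ici] at ht; intro h; linarith)
  · exact ContinuousOn.div (by fun_prop) (by fun_prop) (fun t _ => by positivity)

lemma GG_tendsto : Tendsto GG atTop (nhds 0) := by
  have h1 : Tendsto (fun b : ℝ => 2/b) atTop (nhds 0) := tendsto_const_nhds.div_atTop tendsto_id
  have h2 : Tendsto (fun b : ℝ => 4/b^2) atTop (nhds 0) :=
    tendsto_const_nhds.div_atTop (tendsto_pow_atTop two_ne_zero)
  have hnum : Tendsto (fun b : ℝ => (1+2/b)^2) atTop (nhds 1) := by
    have := (tendsto_const_nhds (x := (1:ℝ)) (f := atTop)).add h1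
    simpa using this.pow 2
  have hden : Tendsto (fun b : ℝ => 1+4/b^2) atTop (nhds 1) := by
    simpa using (tendsto_const_nhds (x := (1:ℝ)) (f := atTop)).add h2
  have key : Tendsto (fun b : ℝ => (1+2/b)^2/(1+4/b^2)) atTop (nhds 1) := by
    have hk : Tendsto (fun b : ℝ => (1+2/b)^2/(1+4/b^2)) atTop (nhds (1/1)) := hnum.div hden one_ne_zero
    simpa using hk
  have hratio : Tendsto (fun b : ℝ => (2+b)^2/(b^2+4)) atTop (nhds 1) := by
    apply key.congr'
    filter_upwards [eventually_gt_atTop (0:ℝ)] with b hb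
    field_simp
    ring
  have hlog : Tendsto (fun b : ℝ => Real.log ((2+b)^2/(b^2+4))) atTop (nhds 0) := by
    have := (Real.continuousAt_log one_ne_zero).tendsto.comp hratio
    simpa [Function.comp_def] using this
  have hfin : Tendsto (fun b : ℝ => Real.log ((2+b)^2/(b^2+4)) / 2) atTop (nhds 0) := by
    simpa using hlog.div_const 2
  apply hfin.congr'
  filter_upwards [eventually_gt_atTop (0:ℝ)] with b hb
  rw [GG, Real.log_div (by positivity) (by positivity), Real.log_pow]
  push_cast
  ring

lemma gg_integral : ∫ t in Ioi (0:ℝ), gg t = 0 := by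
  have h1 := intervalIntegral_tendsto_integral_Ioi 0 gg_integrable tendsto_id
  have hGG0 : GG 0 = 0 := by
    rw [GG]
    norm_num
    rw [show (4:ℝ) = 2^2 by norm_num, Real.log_pow]
    push_cast
    ring
  have h2 : Tendsto (fun b : ℝ => ∫ t in (0:ℝ)..b, gg t) atTop (nhds 0) := by
    apply GG_tendsto.congr'
    filter_upwards [eventually_ge_atTop (0:ℝ)] with b hb
    rw [intervalIntegral.integral_eq_sub_of_hasDerivAt
        (fun t htmem => hasDerivAt_GG (by rw [Set.uIcc_of_le hb] at htmem; exact htmem.1))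
        ((GG_cont_on.mono ?_).intervalIntegrable), hGG0, sub_zero]
    rw [Set.uIcc_of_le hb]
    exact fun x hx => hx.1
  exact tendsto_nhds_unique h1 h2

lemma Phi_abs {t T : ℝ} (ht : 0 ≤ t) (hT : 0 ≤ T) :
    |Phi t T| ≤ 5/4 * Real.exp (-(T*t)) := by
  have hc : (0:ℝ) < 2+t := by linarith
  have hd : (0:ℝ) < t^2+4 := by positivity
  set e1 := Real.exp (-(T*t)) with he1
  set e2 := Real.exp (-((2+t)*T)) with he2
  have hle : e2 ≤ e1 := Real.exp_le_exp.mpr (by nlinarith)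
  have he1p : 0 < e1 := Real.exp_pos _
  have he2p : 0 < e2 := Real.exp_pos _
  set S := 2*Real.sin (2*T) - t*Real.cos (2*T) with hS
  have hS1 : S ≤ 2+t := by
    have := abs_le.mp (Real.abs_sin_le_one (2*T))
    have := abs_le.mp (Real.abs_cos_le_one (2*T))
    nlinarith [this.1, this.2]
  have hS2 : -(2+t) ≤ S := by
    have h1 := abs_le.mp (Real.abs_sin_le_one (2*T))
    have h2 := abs_le.mp (Real.abs_cos_le_one (2*T))
    nlinarith [h1.1, h1.2, h2.1, h2.2]
  have hq1 : e2/(2+t) ≤ e1/2 := by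
    rw [div_le_div_iff₀ hc (by norm_num : (0:ℝ) < 2)]
    nlinarith
  have hq4 : 0 < e2/(2+t) := by positivity
  have hkey : 4*(2+t) ≤ 3*(t^2+4) := by nlinarith
  have hq2 : e1*S/(t^2+4) ≤ 3/4*e1 := by
    rw [div_le_iff₀ hd]
    nlinarith [mul_le_mul_of_nonneg_left hS1 he1p.le]
  have hq3 : -(3/4*e1) ≤ e1*S/(t^2+4) := by
    rw [le_div_iff₀ hd]
    nlinarith [mul_le_mul_of_nonneg_left hS2 he1p.le]
  have hPhi : Phi t T = -(e2/(2+t)) - e1*S/(t^2+4) := by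
    rw [Phi]; ring
  rw [hPhi, abs_le]
  constructor <;> linarith

lemma r_integrable {T : ℝ} (hT : 0 < T) : IntegrableOn (fun t => Phi t T) (Ioi (0:ℝ)) := by
  have hmaj : IntegrableOn (fun t : ℝ => 5/4 * Real.exp (-(T*t))) (Ioi 0) := by
    have := (exp_neg_integrableOn_Ioi 0 hT).const_mul (5/4)
    simpa [neg_mul, IntegrableOn] using this
  refine Integrable.mono' hmaj ?_ ?_
  · apply Measurable.aestronglyMeasurable
    unfold Phi
    fun_prop
  · filter_upwards [ae_restrict_mem measurableSet_Ioi] with t ht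
    exact (Phi_abs (le_of_lt ht) hT.le)

lemma r_norm {T : ℝ} (hT : 0 < T) :
    ‖∫ t in Ioi (0:ℝ), Phi t T‖ ≤ 5/4 * (1/T) := by
  have hmaj : Integrable (fun t : ℝ => 5/4 * Real.exp (-(T*t)))
      (volume.restrict (Ioi 0)) := by
    have := (exp_neg_integrableOn_Ioi 0 hT).const_mul (5/4)
    simpa [neg_mul] using this
  refine (norm_integral_le_of_norm_le hmaj ?_).trans_eq ?_
  · filter_upwards [ae_restrict_mem measurableSet_Ioi] with t ht
    exact Phi_abs (le_of_lt ht) hT.le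
  · rw [MeasureTheory.integral_const_mul, exp_int hT]

lemma fubini_int {T : ℝ} (hT : 0 < T) :
    Integrable (Function.uncurry FF)
      ((volume.restrict (Ioc (0:ℝ) T)).prod (volume.restrict (Ioi (0:ℝ)))) := by
  have hcont : Continuous (Function.uncurry FF) := by
    unfold Function.uncurry FF ff; fun_prop
  have hmeas := hcont.aestronglyMeasurable
    (μ := (volume.restrict (Ioc (0:ℝ) T)).prod (volume.restrict (Ioi (0:ℝ))))
  rw [integrable_prod_iff hmeas]
  constructor
  · filter_upwards [ae_restrict_mem measurableSet_Ioc] with x hx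
    have := (exp_neg_integrableOn_Ioi 0 hx.1).const_mul (ff x)
    simpa [Function.uncurry, FF, neg_mul] using this
  · refine Integrable.mono' (integrable_const 4) hmeas.norm.integral_prod_right' ?_
    filter_upwards [ae_restrict_mem measurableSet_Ioc] with x hx
    have hx0 : 0 < x := hx.1
    have hcalc : ∫ t in Ioi (0:ℝ), ‖FF x t‖ = |ff x| * (1/x) := by
      have heq : (fun t => ‖FF x t‖) = fun t => |ff x| * Real.exp (-(x*t)) := by
        funext t
        rw [FF, norm_mul, Real.norm_eq_abs, Real.norm_eq_abs, Real.abs_exp]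
      rw [heq, MeasureTheory.integral_const_mul, exp_int hx0]
    have hb : |ff x| * (1/x) ≤ 4 := by
      rw [mul_one_div, div_le_iff₀ hx0]
      have := aux_abs_le hx0.le
      linarith
    calc ‖∫ t in Ioi (0:ℝ), ‖Function.uncurry FF (x, t)‖‖
        = |ff x| * (1/x) := by
          rw [show (fun t => ‖Function.uncurry FF (x, t)‖) = fun t => ‖FF x t‖ from rfl, hcalc]
          exact abs_of_nonneg (by positivity)
      _ ≤ 4 := hb

/-- The improper integral `∫₀^∞ (e^{-2x} − cos(2x))/x dx` converges (as the limit of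
`∫₀^T` as `T → ∞`) and equals `0`. -/
theorem integral_exp_sub_cos_div_self :
    Tendsto (fun T : ℝ => ∫ x in (0:ℝ)..T, (Real.exp (-2 * x) - Real.cos (2 * x)) / x)
      atTop (nhds 0) := by
  apply squeeze_zero_norm' (a := fun T : ℝ => 5/4 * (1/T))
  · filter_upwards [eventually_ge_atTop (1:ℝ)] with T hT
    have hT0 : 0 < T := by linarith
    have key : ∫ x in (0:ℝ)..T, (Real.exp (-2 * x) - Real.cos (2 * x)) / x
        = ∫ t in Ioi (0:ℝ), Phi t T := by
      rw [intervalIntegral.integral_of_le hT0.le]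
      have s2 : ∫ x in Ioc (0:ℝ) T, (Real.exp (-2 * x) - Real.cos (2 * x)) / x
          = ∫ x in Ioc (0:ℝ) T, ∫ t in Ioi (0:ℝ), FF x t := by
        apply setIntegral_congr_fun measurableSet_Ioc
        intro x hx
        have hx0 : 0 < x := hx.1
        simp only [FF]
        rw [MeasureTheory.integral_const_mul, exp_int hx0, ff]
        ring
      have s3 : ∫ x in Ioc (0:ℝ) T, ∫ t in Ioi (0:ℝ), FF x t
          = ∫ t in Ioi (0:ℝ), ∫ x in Ioc (0:ℝ) T, FF x t :=
        integral_integral_swap (fubini_int hT0)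
      have s4 : ∫ t in Ioi (0:ℝ), ∫ x in Ioc (0:ℝ) T, FF x t
          = ∫ t in Ioi (0:ℝ), (gg t + Phi t T) :=
        setIntegral_congr_fun measurableSet_Ioi fun t ht => inner_int (le_of_lt ht) hT0.le
      have s5 : ∫ t in Ioi (0:ℝ), (gg t + Phi t T) = ∫ t in Ioi (0:ℝ), Phi t T := by
        rw [MeasureTheory.integral_add gg_integrable (r_integrable hT0), gg_integral, zero_add]
      rw [s2, s3, s4, s5]
    rw [key]
    exact r_norm hT0
  · have h := tendsto_inv_atTop_zero (𝕜 := ℝ)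
    simpa [one_div] using h.const_mul (5/4 : ℝ)
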